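/- Suppose the Hodge numbers of a hypothetical complex structure X on S^6 satisfy Serre duality, h^{0,0}=1, h^{3,0}=0, the second-page relation h_2^{2,1}=h_2^{3,1} with E_2^{1,1}=0. Then h^{1,1}(X) ≥ h^{1,2}(X) − h^{0,2}(X). -/
import Mathlib


/-- Suppose the Hodge numbers `h p q` of a hypothetical complex
structure `X` on `S^6` satisfy Serre duality, `h^{0,0}=1`, `h^{3,0}=0`, and consider the
`q = 1` row `0 → E₁^{0,1} → E₁^{1,1} → E₁^{2,1} → E₁^{3,1} → 0` of the first page of the
Frölicher spectral sequence (modelled by finite-dimensional complex vector spaces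
`V0, V1, V2, V3` with differentials `d0, d1, d2` and `h^{p,1} = dim V_p`), with the
second-page vanishing `E₂^{1,1} = 0` (exactness at `V1`) and the second-page relation
`h₂^{2,1} = h₂^{3,1}`. Then `h^{1,1}(X) ≥ h^{1,2}(X) − h^{0,2}(X)`. -/
theorem stmt14 (V0 V1 V2 V3 : Type*)
    [AddCommGroup V0] [Module ℂ V0] [FiniteDimensional ℂ V0]
    [AddCommGroup V1] [Module ℂ V1] [FiniteDimensional ℂ V1]
    [AddCommGroup V2] [Module ℂ V2] [FiniteDimensional ℂ V2]
    [AddCommGroup V3] [Module ℂ V3] [FiniteDimensional ℂ V3]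
    (d0 : V0 →ₗ[ℂ] V1) (d1 : V1 →ₗ[ℂ] V2) (d2 : V2 →ₗ[ℂ] V3)
    (hc1 : d1 ∘ₗ d0 = 0) (hc2 : d2 ∘ₗ d1 = 0)
    (h : ℕ → ℕ → ℕ)
    (hserre : ∀ p q, p ≤ 3 → q ≤ 3 → h p q = h (3 - p) (3 - q))
    (h00 : h 0 0 = 1) (h30 : h 3 0 = 0)
    (hV0 : h 0 1 = Module.finrank ℂ V0) (hV1 : h 1 1 = Module.finrank ℂ V1)
    (hV2 : h 2 1 = Module.finrank ℂ V2) (hV3 : h 3 1 = Module.finrank ℂ V3)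
    (hE211 : LinearMap.ker d1 = LinearMap.range d0)
    (h2row : Module.finrank ℂ
        ((LinearMap.ker d2) ⧸ (LinearMap.range d1).comap (LinearMap.ker d2).subtype)
      = Module.finrank ℂ (V3 ⧸ LinearMap.range d2)) :
    (h 1 1 : ℤ) ≥ (h 1 2 : ℤ) - (h 0 2 : ℤ) := by
  have h12 : h 1 2 = Module.finrank ℂ V2 := by
    rw [hserre 1 2 (by norm_num) (by norm_num)]; simpa using hV2
  have h02 : h 0 2 = Module.finrank ℂ V3 := by
    rw [hserre 0 2 (by norm_num) (by norm_num)]; simpa using hV3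
  have hle : LinearMap.range d1 ≤ LinearMap.ker d2 := by
    rintro x ⟨y, rfl⟩
    have := congrFun (congrArg (fun f => f.toFun) hc2) y
    simpa [LinearMap.mem_ker] using this
  have hcomap : Module.finrank ℂ ((LinearMap.range d1).comap (LinearMap.ker d2).subtype)
      = Module.finrank ℂ (LinearMap.range d1) :=
    (Submodule.comapSubtypeEquivOfLe hle).finrank_eq
  have hA : Module.finrank ℂ
        ((LinearMap.ker d2) ⧸ (LinearMap.range d1).comap (LinearMap.ker d2).subtype)
      + Module.finrank ℂ (LinearMap.range d1) = Module.finrank ℂ (LinearMap.ker d2) := by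
    rw [← hcomap]; exact Submodule.finrank_quotient_add_finrank _
  have hB : Module.finrank ℂ (V3 ⧸ LinearMap.range d2)
      + Module.finrank ℂ (LinearMap.range d2) = Module.finrank ℂ V3 :=
    Submodule.finrank_quotient_add_finrank _
  have hC : Module.finrank ℂ (LinearMap.range d2) + Module.finrank ℂ (LinearMap.ker d2)
      = Module.finrank ℂ V2 := LinearMap.finrank_range_add_finrank_ker d2
  have hD : Module.finrank ℂ (LinearMap.range d1) ≤ Module.finrank ℂ V1 :=
    LinearMap.finrank_range_le d1
  rw [hV1, h12, h02]
  omega
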